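/- Let b > 1 be an integer and let k, m be natural numbers with k ≡ m (mod b-1) and m < b-1. If a_1, ..., a_b are natural numbers satisfying ∑_{i=1}^{b} (i-1)·a_i = k, then ∑_{i=1}^{b} (b-i)·(i-1)·a_i ≥ m·(b-1-m). -/

import Mathlib

private lemma arith_step (n x k : ℕ) (hn : 1 ≤ n) (hx0 : 0 < x) (hxn : x ≤ n) (hxk : x ≤ k) :
    x ^ 2 + (n ^ 2 * ((k - x) / n) + ((k - x) % n) ^ 2) ≤ n ^ 2 * (k / n) + (k % n) ^ 2 := by
  have hn' : 0 < n := hn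
  obtain ⟨q, r, hqr, hr⟩ : ∃ q r, k = n * q + r ∧ r < n :=
    ⟨k / n, k % n, (Nat.div_add_mod k n).symm, Nat.mod_lt _ hn'⟩
  have hdiv : k / n = q := by
    rw [hqr, Nat.mul_add_div hn', Nat.div_eq_of_lt hr, Nat.add_zero]
  have hmod : k % n = r := by
    rw [hqr, Nat.mul_add_mod, Nat.mod_eq_of_lt hr]
  rw [hdiv, hmod]
  rcases le_or_gt x r with hxr | hxr
  · have h1 : k - x = n * q + (r - x) := by omega
    have h2 : (k - x) / n = q := by
      rw [h1, Nat.mul_add_div hn', Nat.div_eq_of_lt (by omega : r - x < n), Nat.add_zero]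
    have h3 : (k - x) % n = r - x := by
      rw [h1, Nat.mul_add_mod, Nat.mod_eq_of_lt (by omega : r - x < n)]
    rw [h2, h3]
    obtain ⟨d, hd, hd'⟩ : ∃ d, r = x + d ∧ r - x = d := ⟨r - x, by omega, rfl⟩
    rw [hd', hd]
    nlinarith
  · have hq0 : q ≠ 0 := by
      intro h
      rw [h, Nat.mul_zero, Nat.zero_add] at hqr
      omega
    obtain ⟨q', hq'⟩ : ∃ q', q = q' + 1 := ⟨q - 1, by omega⟩
    have hmm : n * (q' + 1) = n * q' + n := by ring
    rw [hq'] at hqr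
    have h1 : k - x = n * q' + (n + r - x) := by omega
    have hlt : n + r - x < n := by omega
    have h2 : (k - x) / n = q' := by
      rw [h1, Nat.mul_add_div hn', Nat.div_eq_of_lt hlt, Nat.add_zero]
    have h3 : (k - x) % n = n + r - x := by
      rw [h1, Nat.mul_add_mod, Nat.mod_eq_of_lt hlt]
    rw [h2, h3, hq']
    obtain ⟨y, hy, hxy⟩ : ∃ y, n + r - x = y ∧ x + y = n + r := ⟨n + r - x, rfl, by omega⟩
    rw [hy]
    have hyr : r ≤ y := by omega
    nlinarith [Nat.mul_le_mul hxn hyr]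

private lemma key_lemma (b : ℕ) (hb : 1 < b) (k : ℕ) :
    ∀ a : ℕ → ℕ, ∑ i ∈ Finset.Icc 1 b, (i - 1) * a i = k →
      ∑ i ∈ Finset.Icc 1 b, (i - 1) ^ 2 * a i
        ≤ (b - 1) ^ 2 * (k / (b - 1)) + (k % (b - 1)) ^ 2 := by
  induction k using Nat.strong_induction_on with
  | _ k ih =>
  intro a hsum
  rcases Nat.eq_zero_or_pos k with rfl | hk
  · have hz : ∀ i ∈ Finset.Icc 1 b, (i - 1) ^ 2 * a i = 0 := by
      intro i hi
      have h := (Finset.sum_eq_zero_iff).mp hsum i hi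
      rcases Nat.mul_eq_zero.mp h with h | h
      · rw [pow_two, h, Nat.zero_mul, Nat.zero_mul]
      · rw [h, Nat.mul_zero]
    rw [Finset.sum_eq_zero hz]
    exact Nat.zero_le _
  · have hex : ∃ i ∈ Finset.Icc 1 b, (i - 1) * a i ≠ 0 := by
      by_contra hcon
      push_neg at hcon
      rw [Finset.sum_eq_zero hcon] at hsum
      omega
    obtain ⟨i₀, hmem, hne⟩ := hex
    have hi₀1 : 1 ≤ i₀ := (Finset.mem_Icc.mp hmem).1
    have hi₀b : i₀ ≤ b := (Finset.mem_Icc.mp hmem).2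
    have hx0 : 0 < i₀ - 1 := by
      rcases Nat.eq_zero_or_pos (i₀ - 1) with h | h
      · exact absurd (by rw [h, Nat.zero_mul]) hne
      · exact h
    have ha0 : 0 < a i₀ := by
      rcases Nat.eq_zero_or_pos (a i₀) with h | h
      · exact absurd (by rw [h, Nat.mul_zero]) hne
      · exact h
    have hxk : i₀ - 1 ≤ k := by
      have h1 : (i₀ - 1) * a i₀ ≤ k := by
        rw [← hsum]
        exact Finset.single_le_sum (f := fun i => (i - 1) * a i) (fun i _ => Nat.zero_le _) hmem
      have h2 : i₀ - 1 ≤ (i₀ - 1) * a i₀ := Nat.le_mul_of_pos_right _ ha0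
      omega
    obtain ⟨c, hc⟩ : ∃ c, a i₀ = c + 1 := ⟨a i₀ - 1, by omega⟩
    set a' : ℕ → ℕ := Function.update a i₀ c with ha'
    have hsplit : ∀ f : ℕ → ℕ, ∑ i ∈ Finset.Icc 1 b, f i * a' i
        = f i₀ * c + ∑ i ∈ (Finset.Icc 1 b).erase i₀, f i * a i := by
      intro f
      rw [← Finset.add_sum_erase _ (fun i => f i * a' i) hmem]
      congr 1
      · rw [ha', Function.update_self]
      · apply Finset.sum_congr rfl
        intro j hj
        rw [ha', Function.update_of_ne (Finset.ne_of_mem_erase hj)]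
    have horig : ∀ f : ℕ → ℕ, ∑ i ∈ Finset.Icc 1 b, f i * a i
        = f i₀ * a i₀ + ∑ i ∈ (Finset.Icc 1 b).erase i₀, f i * a i :=
      fun f => (Finset.add_sum_erase _ (fun i => f i * a i) hmem).symm
    have hsum' : ∑ i ∈ Finset.Icc 1 b, (i - 1) * a' i = k - (i₀ - 1) := by
      have h1 := hsplit (fun i => i - 1)
      have h2 := horig (fun i => i - 1)
      rw [h2, hc] at hsum
      have h3 : (i₀ - 1) * (c + 1) = (i₀ - 1) * c + (i₀ - 1) := by ring
      rw [h1]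
      omega
    have hlt : k - (i₀ - 1) < k := by omega
    have IH := ih (k - (i₀ - 1)) hlt a' hsum'
    have hQ : ∑ i ∈ Finset.Icc 1 b, (i - 1) ^ 2 * a i
        = (i₀ - 1) ^ 2 + ∑ i ∈ Finset.Icc 1 b, (i - 1) ^ 2 * a' i := by
      have h1 := hsplit (fun i => (i - 1) ^ 2)
      have h2 := horig (fun i => (i - 1) ^ 2)
      rw [h1, h2, hc]
      ring
    rw [hQ]
    have harith := arith_step (b - 1) (i₀ - 1) k (by omega) hx0 (by omega) hxk
    calc (i₀ - 1) ^ 2 + ∑ i ∈ Finset.Icc 1 b, (i - 1) ^ 2 * a' i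
        ≤ (i₀ - 1) ^ 2 + ((b - 1) ^ 2 * ((k - (i₀ - 1)) / (b - 1))
            + ((k - (i₀ - 1)) % (b - 1)) ^ 2) := Nat.add_le_add_left IH _
      _ ≤ (b - 1) ^ 2 * (k / (b - 1)) + (k % (b - 1)) ^ 2 := harith

theorem stmt0 (b k m : ℕ) (hb : 1 < b) (hmod : k ≡ m [MOD b - 1]) (hm : m < b - 1)
    (a : ℕ → ℕ) (hsum : ∑ i ∈ Finset.Icc 1 b, (i - 1) * a i = k) :
    m * (b - 1 - m) ≤ ∑ i ∈ Finset.Icc 1 b, (b - i) * ((i - 1) * a i) := by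
  have hm' : k % (b - 1) = m := by
    have h := hmod
    unfold Nat.ModEq at h
    rw [Nat.mod_eq_of_lt hm] at h
    exact h
  have hid : ∑ i ∈ Finset.Icc 1 b, (b - i) * ((i - 1) * a i)
      + ∑ i ∈ Finset.Icc 1 b, (i - 1) ^ 2 * a i = (b - 1) * k := by
    rw [← hsum, Finset.mul_sum, ← Finset.sum_add_distrib]
    apply Finset.sum_congr rfl
    intro i hi
    have hi1 : 1 ≤ i := (Finset.mem_Icc.mp hi).1
    have hib : i ≤ b := (Finset.mem_Icc.mp hi).2
    have hbi : b - 1 = (b - i) + (i - 1) := by omega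
    rw [hbi]
    ring
  have hQ := key_lemma b hb k a hsum
  rw [hm'] at hQ
  have hk' : k = (b - 1) * (k / (b - 1)) + m := by
    have := Nat.div_add_mod k (b - 1)
    omega
  have hMF : m * (b - 1 - m) + ((b - 1) ^ 2 * (k / (b - 1)) + m ^ 2) = (b - 1) * k := by
    set q := k / (b - 1) with hqdef
    obtain ⟨d, hd1, hd2⟩ : ∃ d, b - 1 = m + d ∧ b - 1 - m = d := ⟨b - 1 - m, by omega, rfl⟩
    rw [hk', hd2, hd1]
    ring
  omega
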